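/- arXiv:2105.13206 — 2 statements merged into one kernel-verified Lean document; each statement's English description precedes it below -/
import Mathlib

section
/- Let R, n be positive integers and let q_D ∈ [0,1). For each k ∈ {1,…,R} and ℓ ∈ {1,2,3}, let A_{ℓ,k} be an n×n real symmetric positive semidefinite matrix, let D_{ℓ,k} be an n×n real diagonal matrix, and let d⁰_{ℓ,k} > 0 be real constants satisfying the two-sided Loewner bounds (1−q_D)·d⁰_{ℓ,k}•I ≼ D_{ℓ,k} ≼ (1+q_D)·d⁰_{ℓ,k}•I. Define A := Σ_{k=1}^R ( A_{1,k}⊗D_{2,k}⊗D_{3,k} + D_{1,k}⊗A_{2,k}⊗D_{3,k} + D_{1,k}⊗D_{2,k}⊗A_{3,k} ) and A₂ := Σ_{k=1}^R ( d⁰_{2,k}d⁰_{3,k}•(A_{1,k}⊗I⊗I) + d⁰_{1,k}d⁰_{3,k}•(I⊗A_{2,k}⊗I) + d⁰_{1,k}d⁰_{2,k}•(I⊗I⊗A_{3,k}) ). Then (1−q_D)²•A₂ ≼ A ≼ (1+q_D)²•A₂. (Lemma 3.1, estimate (3.7) for the preconditioner matrix A₂, case d = 3.) -/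
open Matrix Kronecker

private lemma kron_psd {m p : Type*} [Fintype m] [Fintype p]
    {A : Matrix m m ℝ} {B : Matrix p p ℝ}
    (hA : A.PosSemidef) (hB : B.PosSemidef) : (A ⊗ₖ B).PosSemidef := by
  exact hA.kronecker hB

private lemma smul_psd {m : Type*} [Fintype m] {A : Matrix m m ℝ} {c : ℝ}
    (hc : 0 ≤ c) (hA : A.PosSemidef) : (c • A).PosSemidef := by
  refine ⟨?_, fun x => ?_⟩
  · unfold Matrix.IsHermitian
    rw [Matrix.conjTranspose_smul, hA.1]
    simp
  · exact (hA.smul hc).2 x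

private lemma psd_sum {ι m : Type*} [Fintype m] (s : Finset ι) (f : ι → Matrix m m ℝ)
    (h : ∀ i ∈ s, (f i).PosSemidef) : (∑ i ∈ s, f i).PosSemidef := by
  classical
  induction s using Finset.induction_on with
  | empty => simpa using Matrix.PosSemidef.zero
  | insert a s hi ih =>
    rw [Finset.sum_insert hi]
    exact (h _ (Finset.mem_insert_self _ _)).add
      (ih fun i hm => h i (Finset.mem_insert_of_mem hm))

variable {n : ℕ}

private lemma low1 {A B C : Matrix (Fin n) (Fin n) ℝ} {b c : ℝ}
    (hA : A.PosSemidef) (hB : (B - b • (1 : Matrix (Fin n) (Fin n) ℝ)).PosSemidef)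
    (hC : (C - c • (1 : Matrix (Fin n) (Fin n) ℝ)).PosSemidef) (hb : 0 ≤ b) (hc : 0 ≤ c) :
    (A ⊗ₖ B ⊗ₖ C - (b * c) • (A ⊗ₖ (1 : Matrix (Fin n) (Fin n) ℝ) ⊗ₖ
      (1 : Matrix (Fin n) (Fin n) ℝ))).PosSemidef := by
  have hBpsd : B.PosSemidef := by
    have := hB.add (smul_psd hb Matrix.PosSemidef.one)
    simpa using this
  have key : A ⊗ₖ B ⊗ₖ C - (b * c) • (A ⊗ₖ (1 : Matrix (Fin n) (Fin n) ℝ) ⊗ₖ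
      (1 : Matrix (Fin n) (Fin n) ℝ))
      = A ⊗ₖ B ⊗ₖ (C - c • (1 : Matrix (Fin n) (Fin n) ℝ))
        + (A ⊗ₖ (B - b • (1 : Matrix (Fin n) (Fin n) ℝ))) ⊗ₖ
          (c • (1 : Matrix (Fin n) (Fin n) ℝ)) := by
    ext ⟨⟨i1, i2⟩, i3⟩ ⟨⟨j1, j2⟩, j3⟩
    simp only [Matrix.sub_apply, Matrix.add_apply, Matrix.smul_apply, Matrix.kroneckerMap_apply,
      Matrix.one_apply, smul_eq_mul, mul_ite, mul_one, mul_zero]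
    split_ifs <;> ring
  rw [key]
  exact (kron_psd (kron_psd hA hBpsd) hC).add
    (kron_psd (kron_psd hA hB) (smul_psd hc Matrix.PosSemidef.one))

private lemma low2 {A B C : Matrix (Fin n) (Fin n) ℝ} {b c : ℝ}
    (hA : A.PosSemidef) (hB : (B - b • (1 : Matrix (Fin n) (Fin n) ℝ)).PosSemidef)
    (hC : (C - c • (1 : Matrix (Fin n) (Fin n) ℝ)).PosSemidef) (hb : 0 ≤ b) (hc : 0 ≤ c) :
    (B ⊗ₖ A ⊗ₖ C - (b * c) • ((1 : Matrix (Fin n) (Fin n) ℝ) ⊗ₖ A ⊗ₖ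
      (1 : Matrix (Fin n) (Fin n) ℝ))).PosSemidef := by
  have hBpsd : B.PosSemidef := by
    have := hB.add (smul_psd hb Matrix.PosSemidef.one)
    simpa using this
  have key : B ⊗ₖ A ⊗ₖ C - (b * c) • ((1 : Matrix (Fin n) (Fin n) ℝ) ⊗ₖ A ⊗ₖ
      (1 : Matrix (Fin n) (Fin n) ℝ))
      = B ⊗ₖ A ⊗ₖ (C - c • (1 : Matrix (Fin n) (Fin n) ℝ))
        + ((B - b • (1 : Matrix (Fin n) (Fin n) ℝ)) ⊗ₖ A) ⊗ₖ
          (c • (1 : Matrix (Fin n) (Fin n) ℝ)) := by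
    ext ⟨⟨i1, i2⟩, i3⟩ ⟨⟨j1, j2⟩, j3⟩
    simp only [Matrix.sub_apply, Matrix.add_apply, Matrix.smul_apply, Matrix.kroneckerMap_apply,
      Matrix.one_apply, smul_eq_mul, mul_ite, mul_one, mul_zero]
    split_ifs <;> ring
  rw [key]
  exact (kron_psd (kron_psd hBpsd hA) hC).add
    (kron_psd (kron_psd hB hA) (smul_psd hc Matrix.PosSemidef.one))

private lemma low3 {A B C : Matrix (Fin n) (Fin n) ℝ} {b c : ℝ}
    (hA : A.PosSemidef) (hB : (B - b • (1 : Matrix (Fin n) (Fin n) ℝ)).PosSemidef)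
    (hC : (C - c • (1 : Matrix (Fin n) (Fin n) ℝ)).PosSemidef) (hb : 0 ≤ b) (hc : 0 ≤ c) :
    (B ⊗ₖ C ⊗ₖ A - (b * c) • ((1 : Matrix (Fin n) (Fin n) ℝ) ⊗ₖ
      (1 : Matrix (Fin n) (Fin n) ℝ) ⊗ₖ A)).PosSemidef := by
  have hBpsd : B.PosSemidef := by
    have := hB.add (smul_psd hb Matrix.PosSemidef.one)
    simpa using this
  have key : B ⊗ₖ C ⊗ₖ A - (b * c) • ((1 : Matrix (Fin n) (Fin n) ℝ) ⊗ₖ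
      (1 : Matrix (Fin n) (Fin n) ℝ) ⊗ₖ A)
      = (B ⊗ₖ (C - c • (1 : Matrix (Fin n) (Fin n) ℝ))) ⊗ₖ A
        + ((B - b • (1 : Matrix (Fin n) (Fin n) ℝ)) ⊗ₖ
          (c • (1 : Matrix (Fin n) (Fin n) ℝ))) ⊗ₖ A := by
    ext ⟨⟨i1, i2⟩, i3⟩ ⟨⟨j1, j2⟩, j3⟩
    simp only [Matrix.sub_apply, Matrix.add_apply, Matrix.smul_apply, Matrix.kroneckerMap_apply,
      Matrix.one_apply, smul_eq_mul, mul_ite, mul_one, mul_zero]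
    split_ifs <;> ring
  rw [key]
  exact (kron_psd (kron_psd hBpsd hC) hA).add
    (kron_psd (kron_psd hB (smul_psd hc Matrix.PosSemidef.one)) hA)

private lemma up1 {A B C : Matrix (Fin n) (Fin n) ℝ} {b c : ℝ}
    (hA : A.PosSemidef) (hBpsd : B.PosSemidef)
    (hB : (b • (1 : Matrix (Fin n) (Fin n) ℝ) - B).PosSemidef)
    (hC : (c • (1 : Matrix (Fin n) (Fin n) ℝ) - C).PosSemidef) (hc : 0 ≤ c) :
    ((b * c) • (A ⊗ₖ (1 : Matrix (Fin n) (Fin n) ℝ) ⊗ₖ (1 : Matrix (Fin n) (Fin n) ℝ))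
      - A ⊗ₖ B ⊗ₖ C).PosSemidef := by
  have key : (b * c) • (A ⊗ₖ (1 : Matrix (Fin n) (Fin n) ℝ) ⊗ₖ (1 : Matrix (Fin n) (Fin n) ℝ))
      - A ⊗ₖ B ⊗ₖ C
      = A ⊗ₖ B ⊗ₖ (c • (1 : Matrix (Fin n) (Fin n) ℝ) - C)
        + (A ⊗ₖ (b • (1 : Matrix (Fin n) (Fin n) ℝ) - B)) ⊗ₖ
          (c • (1 : Matrix (Fin n) (Fin n) ℝ)) := by
    ext ⟨⟨i1, i2⟩, i3⟩ ⟨⟨j1, j2⟩, j3⟩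
    simp only [Matrix.sub_apply, Matrix.add_apply, Matrix.smul_apply, Matrix.kroneckerMap_apply,
      Matrix.one_apply, smul_eq_mul, mul_ite, mul_one, mul_zero]
    split_ifs <;> ring
  rw [key]
  exact (kron_psd (kron_psd hA hBpsd) hC).add
    (kron_psd (kron_psd hA hB) (smul_psd hc Matrix.PosSemidef.one))

private lemma up2 {A B C : Matrix (Fin n) (Fin n) ℝ} {b c : ℝ}
    (hA : A.PosSemidef) (hBpsd : B.PosSemidef)
    (hB : (b • (1 : Matrix (Fin n) (Fin n) ℝ) - B).PosSemidef)
    (hC : (c • (1 : Matrix (Fin n) (Fin n) ℝ) - C).PosSemidef) (hc : 0 ≤ c) :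
    ((b * c) • ((1 : Matrix (Fin n) (Fin n) ℝ) ⊗ₖ A ⊗ₖ (1 : Matrix (Fin n) (Fin n) ℝ))
      - B ⊗ₖ A ⊗ₖ C).PosSemidef := by
  have key : (b * c) • ((1 : Matrix (Fin n) (Fin n) ℝ) ⊗ₖ A ⊗ₖ (1 : Matrix (Fin n) (Fin n) ℝ))
      - B ⊗ₖ A ⊗ₖ C
      = B ⊗ₖ A ⊗ₖ (c • (1 : Matrix (Fin n) (Fin n) ℝ) - C)
        + ((b • (1 : Matrix (Fin n) (Fin n) ℝ) - B) ⊗ₖ A) ⊗ₖ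
          (c • (1 : Matrix (Fin n) (Fin n) ℝ)) := by
    ext ⟨⟨i1, i2⟩, i3⟩ ⟨⟨j1, j2⟩, j3⟩
    simp only [Matrix.sub_apply, Matrix.add_apply, Matrix.smul_apply, Matrix.kroneckerMap_apply,
      Matrix.one_apply, smul_eq_mul, mul_ite, mul_one, mul_zero]
    split_ifs <;> ring
  rw [key]
  exact (kron_psd (kron_psd hBpsd hA) hC).add
    (kron_psd (kron_psd hB hA) (smul_psd hc Matrix.PosSemidef.one))

private lemma up3 {A B C : Matrix (Fin n) (Fin n) ℝ} {b c : ℝ}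
    (hA : A.PosSemidef) (hBpsd : B.PosSemidef)
    (hB : (b • (1 : Matrix (Fin n) (Fin n) ℝ) - B).PosSemidef)
    (hC : (c • (1 : Matrix (Fin n) (Fin n) ℝ) - C).PosSemidef) (hc : 0 ≤ c) :
    ((b * c) • ((1 : Matrix (Fin n) (Fin n) ℝ) ⊗ₖ (1 : Matrix (Fin n) (Fin n) ℝ) ⊗ₖ A)
      - B ⊗ₖ C ⊗ₖ A).PosSemidef := by
  have key : (b * c) • ((1 : Matrix (Fin n) (Fin n) ℝ) ⊗ₖ (1 : Matrix (Fin n) (Fin n) ℝ) ⊗ₖ A)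
      - B ⊗ₖ C ⊗ₖ A
      = (B ⊗ₖ (c • (1 : Matrix (Fin n) (Fin n) ℝ) - C)) ⊗ₖ A
        + ((b • (1 : Matrix (Fin n) (Fin n) ℝ) - B) ⊗ₖ
          (c • (1 : Matrix (Fin n) (Fin n) ℝ))) ⊗ₖ A := by
    ext ⟨⟨i1, i2⟩, i3⟩ ⟨⟨j1, j2⟩, j3⟩
    simp only [Matrix.sub_apply, Matrix.add_apply, Matrix.smul_apply, Matrix.kroneckerMap_apply,
      Matrix.one_apply, smul_eq_mul, mul_ite, mul_one, mul_zero]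
    split_ifs <;> ring
  rw [key]
  exact (kron_psd (kron_psd hBpsd hC) hA).add
    (kron_psd (kron_psd hB (smul_psd hc Matrix.PosSemidef.one)) hA)

/-- Lemma 3.1, estimate (3.7) for the preconditioner matrix `A₂`, case `d = 3`:
for symmetric positive semidefinite `A_{ℓ,k}`, diagonal `D_{ℓ,k}` with
`(1−q_D)·d⁰_{ℓ,k}•I ≼ D_{ℓ,k} ≼ (1+q_D)·d⁰_{ℓ,k}•I`, the Kronecker-rank matrices
`A` and `A₂` satisfy `(1−q_D)²•A₂ ≼ A ≼ (1+q_D)²•A₂` in the Loewner order. -/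
theorem stmt_4 {R n : ℕ} (hR : 0 < R) (hn : 0 < n)
    (qD : ℝ) (hq0 : 0 ≤ qD) (hq1 : qD < 1)
    (A1 A2 A3 D1 D2 D3 : Fin R → Matrix (Fin n) (Fin n) ℝ)
    (d1 d2 d3 : Fin R → ℝ)
    (hA1 : ∀ k, (A1 k).PosSemidef) (hA2 : ∀ k, (A2 k).PosSemidef)
    (hA3 : ∀ k, (A3 k).PosSemidef)
    (hD1diag : ∀ k, (D1 k).IsDiag) (hD2diag : ∀ k, (D2 k).IsDiag)
    (hD3diag : ∀ k, (D3 k).IsDiag)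
    (hd1 : ∀ k, 0 < d1 k) (hd2 : ∀ k, 0 < d2 k) (hd3 : ∀ k, 0 < d3 k)
    (hD1low : ∀ k, (D1 k - ((1 - qD) * d1 k) • (1 : Matrix (Fin n) (Fin n) ℝ)).PosSemidef)
    (hD1up : ∀ k, (((1 + qD) * d1 k) • (1 : Matrix (Fin n) (Fin n) ℝ) - D1 k).PosSemidef)
    (hD2low : ∀ k, (D2 k - ((1 - qD) * d2 k) • (1 : Matrix (Fin n) (Fin n) ℝ)).PosSemidef)
    (hD2up : ∀ k, (((1 + qD) * d2 k) • (1 : Matrix (Fin n) (Fin n) ℝ) - D2 k).PosSemidef)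
    (hD3low : ∀ k, (D3 k - ((1 - qD) * d3 k) • (1 : Matrix (Fin n) (Fin n) ℝ)).PosSemidef)
    (hD3up : ∀ k, (((1 + qD) * d3 k) • (1 : Matrix (Fin n) (Fin n) ℝ) - D3 k).PosSemidef)
    (A A₂ : Matrix ((Fin n × Fin n) × Fin n) ((Fin n × Fin n) × Fin n) ℝ)
    (hA : A = ∑ k, (A1 k ⊗ₖ D2 k ⊗ₖ D3 k + D1 k ⊗ₖ A2 k ⊗ₖ D3 k + D1 k ⊗ₖ D2 k ⊗ₖ A3 k))
    (hA₂ : A₂ = ∑ k,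
      ((d2 k * d3 k) • (A1 k ⊗ₖ (1 : Matrix (Fin n) (Fin n) ℝ) ⊗ₖ (1 : Matrix (Fin n) (Fin n) ℝ))
        + (d1 k * d3 k) • ((1 : Matrix (Fin n) (Fin n) ℝ) ⊗ₖ A2 k ⊗ₖ (1 : Matrix (Fin n) (Fin n) ℝ))
        + (d1 k * d2 k) • ((1 : Matrix (Fin n) (Fin n) ℝ) ⊗ₖ (1 : Matrix (Fin n) (Fin n) ℝ) ⊗ₖ A3 k))) :
    (A - (1 - qD) ^ 2 • A₂).PosSemidef ∧ ((1 + qD) ^ 2 • A₂ - A).PosSemidef := by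
  have h1m : (0:ℝ) ≤ 1 - qD := by linarith
  have h1p : (0:ℝ) ≤ 1 + qD := by linarith
  have hb1 : ∀ k, 0 ≤ (1 - qD) * d1 k := fun k => mul_nonneg h1m (hd1 k).le
  have hb2 : ∀ k, 0 ≤ (1 - qD) * d2 k := fun k => mul_nonneg h1m (hd2 k).le
  have hb3 : ∀ k, 0 ≤ (1 - qD) * d3 k := fun k => mul_nonneg h1m (hd3 k).le
  have hc1 : ∀ k, 0 ≤ (1 + qD) * d1 k := fun k => mul_nonneg h1p (hd1 k).le
  have hc2 : ∀ k, 0 ≤ (1 + qD) * d2 k := fun k => mul_nonneg h1p (hd2 k).le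
  have hc3 : ∀ k, 0 ≤ (1 + qD) * d3 k := fun k => mul_nonneg h1p (hd3 k).le
  have hD1psd : ∀ k, (D1 k).PosSemidef := fun k => by
    have := (hD1low k).add (smul_psd (hb1 k) Matrix.PosSemidef.one); simpa using this
  have hD2psd : ∀ k, (D2 k).PosSemidef := fun k => by
    have := (hD2low k).add (smul_psd (hb2 k) Matrix.PosSemidef.one); simpa using this
  have hD3psd : ∀ k, (D3 k).PosSemidef := fun k => by
    have := (hD3low k).add (smul_psd (hb3 k) Matrix.PosSemidef.one); simpa using this
  constructor
  · rw [hA, hA₂, Finset.smul_sum, ← Finset.sum_sub_distrib]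
    refine psd_sum _ _ fun k _ => ?_
    have e : (A1 k ⊗ₖ D2 k ⊗ₖ D3 k + D1 k ⊗ₖ A2 k ⊗ₖ D3 k + D1 k ⊗ₖ D2 k ⊗ₖ A3 k)
        - (1 - qD) ^ 2 • ((d2 k * d3 k) • (A1 k ⊗ₖ (1 : Matrix (Fin n) (Fin n) ℝ) ⊗ₖ (1 : Matrix (Fin n) (Fin n) ℝ))
          + (d1 k * d3 k) • ((1 : Matrix (Fin n) (Fin n) ℝ) ⊗ₖ A2 k ⊗ₖ (1 : Matrix (Fin n) (Fin n) ℝ))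
          + (d1 k * d2 k) • ((1 : Matrix (Fin n) (Fin n) ℝ) ⊗ₖ (1 : Matrix (Fin n) (Fin n) ℝ) ⊗ₖ A3 k))
        = (A1 k ⊗ₖ D2 k ⊗ₖ D3 k - (((1 - qD) * d2 k) * ((1 - qD) * d3 k)) •
            (A1 k ⊗ₖ (1 : Matrix (Fin n) (Fin n) ℝ) ⊗ₖ (1 : Matrix (Fin n) (Fin n) ℝ)))
          + (D1 k ⊗ₖ A2 k ⊗ₖ D3 k - (((1 - qD) * d1 k) * ((1 - qD) * d3 k)) •
            ((1 : Matrix (Fin n) (Fin n) ℝ) ⊗ₖ A2 k ⊗ₖ (1 : Matrix (Fin n) (Fin n) ℝ)))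
          + (D1 k ⊗ₖ D2 k ⊗ₖ A3 k - (((1 - qD) * d1 k) * ((1 - qD) * d2 k)) •
            ((1 : Matrix (Fin n) (Fin n) ℝ) ⊗ₖ (1 : Matrix (Fin n) (Fin n) ℝ) ⊗ₖ A3 k)) := by
      module
    rw [e]
    exact ((low1 (hA1 k) (hD2low k) (hD3low k) (hb2 k) (hb3 k)).add
      (low2 (hA2 k) (hD1low k) (hD3low k) (hb1 k) (hb3 k))).add
      (low3 (hA3 k) (hD1low k) (hD2low k) (hb1 k) (hb2 k))
  · rw [hA, hA₂, Finset.smul_sum, ← Finset.sum_sub_distrib]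
    refine psd_sum _ _ fun k _ => ?_
    have e : (1 + qD) ^ 2 • ((d2 k * d3 k) • (A1 k ⊗ₖ (1 : Matrix (Fin n) (Fin n) ℝ) ⊗ₖ (1 : Matrix (Fin n) (Fin n) ℝ))
          + (d1 k * d3 k) • ((1 : Matrix (Fin n) (Fin n) ℝ) ⊗ₖ A2 k ⊗ₖ (1 : Matrix (Fin n) (Fin n) ℝ))
          + (d1 k * d2 k) • ((1 : Matrix (Fin n) (Fin n) ℝ) ⊗ₖ (1 : Matrix (Fin n) (Fin n) ℝ) ⊗ₖ A3 k))
        - (A1 k ⊗ₖ D2 k ⊗ₖ D3 k + D1 k ⊗ₖ A2 k ⊗ₖ D3 k + D1 k ⊗ₖ D2 k ⊗ₖ A3 k)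
        = ((((1 + qD) * d2 k) * ((1 + qD) * d3 k)) •
            (A1 k ⊗ₖ (1 : Matrix (Fin n) (Fin n) ℝ) ⊗ₖ (1 : Matrix (Fin n) (Fin n) ℝ))
            - A1 k ⊗ₖ D2 k ⊗ₖ D3 k)
          + ((((1 + qD) * d1 k) * ((1 + qD) * d3 k)) •
            ((1 : Matrix (Fin n) (Fin n) ℝ) ⊗ₖ A2 k ⊗ₖ (1 : Matrix (Fin n) (Fin n) ℝ))
            - D1 k ⊗ₖ A2 k ⊗ₖ D3 k)
          + ((((1 + qD) * d1 k) * ((1 + qD) * d2 k)) •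
            ((1 : Matrix (Fin n) (Fin n) ℝ) ⊗ₖ (1 : Matrix (Fin n) (Fin n) ℝ) ⊗ₖ A3 k)
            - D1 k ⊗ₖ D2 k ⊗ₖ A3 k) := by
      module
    rw [e]
    exact ((up1 (hA1 k) (hD2psd k) (hD2up k) (hD3up k) (hc3 k)).add
      (up2 (hA2 k) (hD1psd k) (hD1up k) (hD3up k) (hc3 k))).add
      (up3 (hA3 k) (hD1psd k) (hD1up k) (hD2up k) (hc2 k))
end

section
/- Let d ≥ 2 be a natural number, q ∈ [0,1), and let A and P be n×n real symmetric positive definite matrices satisfying (1−q)^{d−1}•P ≼ A ≼ (1+q)^{d−1}•P in the Loewner order. Then min{(1+q)^{1−d}, (1−q)^{d−1}}•(P + P⁻¹) ≼ A + A⁻¹ ≼ max{(1+q)^{d−1}, (1−q)^{1−d}}•(P + P⁻¹); consequently the generalized condition number of the preconditioned matrix (P + P⁻¹)⁻¹(A + A⁻¹) is bounded by Q^{d−1} := max{(1+q)^{d−1}, (1−q)^{1−d}} / min{(1+q)^{1−d}, (1−q)^{d−1}}, uniformly in n. (Theorem 3.2, bound (3.9) for the preconditioner B₂ = A₂ + A₂⁻¹.)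 -/
open Matrix

/-- Generalized condition number of the pencil `(M, N)`: the ratio of the largest
to the smallest generalized Rayleigh quotient `(xᵀMx)/(xᵀNx)` over nonzero `x`,
i.e. the ratio of the largest to the smallest generalized eigenvalue for a
symmetric positive definite pencil. -/
noncomputable def genCond {n : ℕ} (M N : Matrix (Fin n) (Fin n) ℝ) : ℝ :=
  sSup {r : ℝ | ∃ x : Fin n → ℝ, x ≠ 0 ∧ r = (x ⬝ᵥ M *ᵥ x) / (x ⬝ᵥ N *ᵥ x)} /
  sInf {r : ℝ | ∃ x : Fin n → ℝ, x ≠ 0 ∧ r = (x ⬝ᵥ M *ᵥ x) / (x ⬝ᵥ N *ᵥ x)}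

section Aux

variable {n : ℕ}

lemma psd_dot {M : Matrix (Fin n) (Fin n) ℝ} (h : M.PosSemidef) (x : Fin n → ℝ) :
    0 ≤ x ⬝ᵥ M *ᵥ x := by simpa using h.dotProduct_mulVec_nonneg x

lemma pd_dot {M : Matrix (Fin n) (Fin n) ℝ} (h : M.PosDef) {x : Fin n → ℝ} (hx : x ≠ 0) :
    0 < x ⬝ᵥ M *ᵥ x := by simpa using h.dotProduct_mulVec_pos hx

lemma herm_smul {M : Matrix (Fin n) (Fin n) ℝ} (h : M.IsHermitian) (c : ℝ) :
    (c • M).IsHermitian := by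
  unfold Matrix.IsHermitian at *
  rw [conjTranspose_smul, h]
  simp

lemma dot_symm {A : Matrix (Fin n) (Fin n) ℝ} (hA : A.IsHermitian) (u v : Fin n → ℝ) :
    (A *ᵥ u) ⬝ᵥ v = u ⬝ᵥ (A *ᵥ v) := by
  have ht : Aᵀ = A := by
    have := hA.eq
    simpa [conjTranspose_eq_transpose_of_trivial] using this
  rw [dotProduct_mulVec, ← mulVec_transpose, ht]

/-- Loewner antitonicity of the matrix inverse. -/
lemma inv_antitone {A B : Matrix (Fin n) (Fin n) ℝ} (hA : A.PosDef) (hB : B.PosDef)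
    (h : (B - A).PosSemidef) : (A⁻¹ - B⁻¹).PosSemidef := by
  refine PosSemidef.of_dotProduct_mulVec_nonneg (hA.1.inv.sub hB.1.inv) (fun x => ?_)
  simp only [star_trivial]
  set y := B⁻¹ *ᵥ x with hy
  set z := y - A⁻¹ *ᵥ x with hz
  have hAx : A *ᵥ (A⁻¹ *ᵥ x) = x := by
    rw [mulVec_mulVec, Matrix.mul_nonsing_inv _ hA.det_pos.ne'.isUnit, one_mulVec]
  have hBx : B *ᵥ y = x := by
    rw [hy, mulVec_mulVec, Matrix.mul_nonsing_inv _ hB.det_pos.ne'.isUnit, one_mulVec]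
  have h1 : (A⁻¹ *ᵥ x) ⬝ᵥ (A *ᵥ y) = x ⬝ᵥ y := by
    rw [dotProduct_comm, dot_symm hA.1, hAx, dotProduct_comm]
  have e1 : z ⬝ᵥ A *ᵥ z = y ⬝ᵥ (A *ᵥ y) - 2 * (x ⬝ᵥ y) + x ⬝ᵥ (A⁻¹ *ᵥ x) := by
    have hAz : A *ᵥ z = A *ᵥ y - x := by rw [hz, mulVec_sub, hAx]
    rw [hAz, hz]
    simp only [sub_dotProduct, dotProduct_sub, h1]
    rw [dotProduct_comm y x, dotProduct_comm (A⁻¹ *ᵥ x) x]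
    ring
  have e2 : y ⬝ᵥ (B - A) *ᵥ y = x ⬝ᵥ y - y ⬝ᵥ (A *ᵥ y) := by
    rw [sub_mulVec, dotProduct_sub, hBx, dotProduct_comm y x]
  have e3 : x ⬝ᵥ (A⁻¹ - B⁻¹) *ᵥ x = x ⬝ᵥ (A⁻¹ *ᵥ x) - x ⬝ᵥ y := by
    rw [sub_mulVec, dotProduct_sub, hy]
  have p1 : 0 ≤ z ⬝ᵥ A *ᵥ z := psd_dot hA.posSemidef z
  have p2 : 0 ≤ y ⬝ᵥ (B - A) *ᵥ y := psd_dot h y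
  linarith

lemma smul_inv_eq {c : ℝ} (hc : c ≠ 0) {P : Matrix (Fin n) (Fin n) ℝ} (hP : P.PosDef) :
    (c • P)⁻¹ = c⁻¹ • P⁻¹ := by
  refine Matrix.inv_eq_left_inv ?_
  rw [Matrix.smul_mul, Matrix.mul_smul, smul_smul, inv_mul_cancel₀ hc,
    Matrix.nonsing_inv_mul _ hP.det_pos.ne'.isUnit, one_smul]

lemma pd_smul {c : ℝ} (hc : 0 < c) {P : Matrix (Fin n) (Fin n) ℝ} (hP : P.PosDef) :
    (c • P).PosDef := by
  refine PosDef.of_dotProduct_mulVec_pos (herm_smul hP.1 c) (fun x hx => ?_)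
  have := hP.dotProduct_mulVec_pos hx
  simp only [smul_mulVec, dotProduct_smul, smul_eq_mul] at *
  exact mul_pos hc this

end Aux

/-- Theorem 3.2, bound (3.9) for the preconditioner `B₂ = A₂ + A₂⁻¹`: if
`(1−q)^{d−1}•P ≼ A ≼ (1+q)^{d−1}•P` for symmetric positive definite `A`, `P`,
then `min{(1+q)^{1−d}, (1−q)^{d−1}}•(P+P⁻¹) ≼ A+A⁻¹ ≼
max{(1+q)^{d−1}, (1−q)^{1−d}}•(P+P⁻¹)`; consequently the generalized condition
number of `(P+P⁻¹)⁻¹(A+A⁻¹)` is bounded by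
`Q^{d−1} = max{(1+q)^{d−1}, (1−q)^{1−d}} / min{(1+q)^{1−d}, (1−q)^{d−1}}`,
uniformly in `n`. -/
theorem stmt_9 {n : ℕ} (d : ℕ) (hd : 2 ≤ d) (q : ℝ) (hq0 : 0 ≤ q) (hq1 : q < 1)
    (A P : Matrix (Fin n) (Fin n) ℝ) (hA : A.PosDef) (hP : P.PosDef)
    (hlow : (A - (1 - q) ^ (d - 1) • P).PosSemidef)
    (hup : ((1 + q) ^ (d - 1) • P - A).PosSemidef) :
    ((A + A⁻¹) - min (((1 + q) ^ (d - 1))⁻¹) ((1 - q) ^ (d - 1)) • (P + P⁻¹)).PosSemidef ∧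
    (max ((1 + q) ^ (d - 1)) (((1 - q) ^ (d - 1))⁻¹) • (P + P⁻¹) - (A + A⁻¹)).PosSemidef ∧
    genCond (A + A⁻¹) (P + P⁻¹) ≤
      max ((1 + q) ^ (d - 1)) (((1 - q) ^ (d - 1))⁻¹) /
        min (((1 + q) ^ (d - 1))⁻¹) ((1 - q) ^ (d - 1)) := by
  set m : ℝ := (1 - q) ^ (d - 1) with hm_def
  set M : ℝ := (1 + q) ^ (d - 1) with hM_def
  have hm : 0 < m := pow_pos (by linarith) _
  have hM : 0 < M := pow_pos (by linarith) _
  set mn : ℝ := min M⁻¹ m with hmn_def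
  set mx : ℝ := max M m⁻¹ with hmx_def
  have hmn : 0 < mn := lt_min (inv_pos.2 hM) hm
  have hmx : 0 < mx := lt_of_lt_of_le hM (le_max_left _ _)
  -- inverse bounds
  have hinv1 : (m⁻¹ • P⁻¹ - A⁻¹).PosSemidef := by
    have := inv_antitone (pd_smul hm hP) hA (by simpa using hlow)
    rwa [smul_inv_eq hm.ne' hP] at this
  have hinv2 : (A⁻¹ - M⁻¹ • P⁻¹).PosSemidef := by
    have := inv_antitone hA (pd_smul hM hP) (by simpa using hup)
    rwa [smul_inv_eq hM.ne' hP] at this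
  -- pointwise quadratic form bounds
  have key : ∀ x : Fin n → ℝ,
      mn * (x ⬝ᵥ (P + P⁻¹) *ᵥ x) ≤ x ⬝ᵥ (A + A⁻¹) *ᵥ x ∧
      x ⬝ᵥ (A + A⁻¹) *ᵥ x ≤ mx * (x ⬝ᵥ (P + P⁻¹) *ᵥ x) := by
    intro x
    have b1 : 0 ≤ x ⬝ᵥ A *ᵥ x - m * (x ⬝ᵥ P *ᵥ x) := by
      have := psd_dot hlow x
      simpa [sub_mulVec, dotProduct_sub, smul_mulVec, dotProduct_smul, smul_eq_mul]
        using this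
    have b2 : 0 ≤ M * (x ⬝ᵥ P *ᵥ x) - x ⬝ᵥ A *ᵥ x := by
      have := psd_dot hup x
      simpa [sub_mulVec, dotProduct_sub, smul_mulVec, dotProduct_smul, smul_eq_mul]
        using this
    have b3 : 0 ≤ m⁻¹ * (x ⬝ᵥ P⁻¹ *ᵥ x) - x ⬝ᵥ A⁻¹ *ᵥ x := by
      have := psd_dot hinv1 x
      simpa [sub_mulVec, dotProduct_sub, smul_mulVec, dotProduct_smul, smul_eq_mul]
        using this
    have b4 : 0 ≤ x ⬝ᵥ A⁻¹ *ᵥ x - M⁻¹ * (x ⬝ᵥ P⁻¹ *ᵥ x) := by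
      have := psd_dot hinv2 x
      simpa [sub_mulVec, dotProduct_sub, smul_mulVec, dotProduct_smul, smul_eq_mul]
        using this
    have pP : 0 ≤ x ⬝ᵥ P *ᵥ x := psd_dot hP.posSemidef x
    have pPi : 0 ≤ x ⬝ᵥ P⁻¹ *ᵥ x := psd_dot hP.inv.posSemidef x
    have l1 : mn ≤ m := min_le_right _ _
    have l2 : mn ≤ M⁻¹ := min_le_left _ _
    have l3 : M ≤ mx := le_max_left _ _
    have l4 : m⁻¹ ≤ mx := le_max_right _ _
    have c1 : mn * (x ⬝ᵥ P *ᵥ x) ≤ m * (x ⬝ᵥ P *ᵥ x) := mul_le_mul_of_nonneg_right l1 pP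
    have c2 : mn * (x ⬝ᵥ P⁻¹ *ᵥ x) ≤ M⁻¹ * (x ⬝ᵥ P⁻¹ *ᵥ x) := mul_le_mul_of_nonneg_right l2 pPi
    have c3 : M * (x ⬝ᵥ P *ᵥ x) ≤ mx * (x ⬝ᵥ P *ᵥ x) := mul_le_mul_of_nonneg_right l3 pP
    have c4 : m⁻¹ * (x ⬝ᵥ P⁻¹ *ᵥ x) ≤ mx * (x ⬝ᵥ P⁻¹ *ᵥ x) := mul_le_mul_of_nonneg_right l4 pPi
    constructor
    · simp only [add_mulVec, dotProduct_add]
      nlinarith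
    · simp only [add_mulVec, dotProduct_add]
      nlinarith
  have hermA : (A + A⁻¹).IsHermitian := hA.1.add hA.1.inv
  have hermP : (P + P⁻¹).IsHermitian := hP.1.add hP.1.inv
  have hPPd : (P + P⁻¹).PosDef := hP.add hP.inv
  have first : ((A + A⁻¹) - mn • (P + P⁻¹)).PosSemidef := by
    refine PosSemidef.of_dotProduct_mulVec_nonneg (hermA.sub (herm_smul hermP mn)) (fun x => ?_)
    have := (key x).1
    simp only [star_trivial, sub_mulVec, dotProduct_sub, smul_mulVec, dotProduct_smul,
      smul_eq_mul]
    linarith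
  have second : (mx • (P + P⁻¹) - (A + A⁻¹)).PosSemidef := by
    refine PosSemidef.of_dotProduct_mulVec_nonneg ((herm_smul hermP mx).sub hermA) (fun x => ?_)
    have := (key x).2
    simp only [star_trivial, sub_mulVec, dotProduct_sub, smul_mulVec, dotProduct_smul,
      smul_eq_mul]
    linarith
  refine ⟨first, second, ?_⟩
  -- condition number bound
  set S : Set ℝ :=
    {r : ℝ | ∃ x : Fin n → ℝ, x ≠ 0 ∧ r = (x ⬝ᵥ (A + A⁻¹) *ᵥ x) / (x ⬝ᵥ (P + P⁻¹) *ᵥ x)}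
    with hS_def
  have hbound : ∀ r ∈ S, mn ≤ r ∧ r ≤ mx := by
    rintro r ⟨x, hx, rfl⟩
    have hden : 0 < x ⬝ᵥ (P + P⁻¹) *ᵥ x := pd_dot hPPd hx
    exact ⟨(le_div_iff₀ hden).2 (by linarith [(key x).1]),
      (div_le_iff₀ hden).2 (by linarith [(key x).2])⟩
  have hgc : genCond (A + A⁻¹) (P + P⁻¹) = sSup S / sInf S := rfl
  rw [hgc]
  rcases Set.eq_empty_or_nonempty S with hE | hNE
  · rw [hE, Real.sSup_empty, Real.sInf_empty]
    simpa using div_nonneg hmx.le hmn.le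
  · have hsup : sSup S ≤ mx := Real.sSup_le (fun r hr => (hbound r hr).2) hmx.le
    have hinf : mn ≤ sInf S := le_csInf hNE (fun r hr => (hbound r hr).1)
    exact div_le_div₀ hmx.le hsup hmn hinf
end
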